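/- arXiv:1307.6864 — 3 statements merged into one kernel-verified Lean document; each statement's English description precedes it below -/
import Mathlib

section
/- Let X ∈ ℂ^{n×n} be Hermitian and v ∈ ℂⁿ be such that ‖X − v v*‖ < ‖v‖²/2 in spectral norm. Let η₁ be the largest eigenvalue of X, x₁ an associated unit-norm eigenvector, and set x = x₁·‖v‖. Then ‖x·‖x‖ − e^{iα}·v·‖v‖‖ ≤ 2√2·‖X − v v*‖ for some α ∈ [0, 2π). -/
open scoped BigOperators InnerProductSpace
set_option maxHeartbeats 1000000
set_option synthInstance.maxHeartbeats 400000

/-- Euclidean norm of a complex vector. -/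
noncomputable def euclNorm {n : ℕ} (x : Fin n → ℂ) : ℝ := Real.sqrt (∑ i, ‖x i‖ ^ 2)

/-- Spectral (ℓ²-operator) norm of a complex matrix. -/
noncomputable def specNorm {m n : ℕ} (M : Matrix (Fin m) (Fin n) ℂ) : ℝ :=
  ‖LinearMap.toContinuousLinearMap (Matrix.toEuclideanLin M)‖

/-- The rank-one matrix v v*. -/
def outer {n : ℕ} (v : Fin n → ℂ) : Matrix (Fin n) (Fin n) ℂ :=
  Matrix.of fun i j => v i * (starRingEnd ℂ) (v j)

private lemma cnorm (r : ℝ) : ‖(r : ℂ)‖ = |r| := by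
  rw [Complex.norm_real, Real.norm_eq_abs]

private lemma pyth {E : Type*} [NormedAddCommGroup E] [InnerProductSpace ℂ E] {a b : E}
    (h : ⟪a, b⟫_ℂ = 0) : ‖a + b‖^2 = ‖a‖^2 + ‖b‖^2 := by
  rw [@norm_add_sq ℂ, h]; simp

private lemma key_bound {F : Type*} [NormedAddCommGroup F] [InnerProductSpace ℂ F]
    (ev u : F) (N ε η₁ : ℝ) (hN0 : 0 < N) (hNv : ‖ev‖ = N) (hu : ‖u‖ = 1)
    (hε0 : 0 ≤ ε) (hclose : ε < N^2/2) (hη : N^2 - ε ≤ η₁)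
    (hres : ‖(η₁:ℂ) • u - (⟪ev, u⟫_ℂ) • ev‖ ≤ ε) :
    ⟪ev, u⟫_ℂ ≠ 0 ∧
    ∀ φ : ℂ, φ = ⟪ev, u⟫_ℂ / ((‖⟪ev, u⟫_ℂ‖ : ℝ) : ℂ) →
      ‖((N:ℂ)^2) • u - (φ * (N:ℂ)) • ev‖ ≤ 2 * Real.sqrt 2 * ε := by
  have hη2 : N^2 ≤ 2 * η₁ := by nlinarith
  have hη0 : 0 < η₁ := by nlinarith
  have hεη : ε < η₁ := by nlinarith
  set c : ℂ := ⟪ev, u⟫_ℂ with hc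
  have hNC : (⟪ev, ev⟫_ℂ) = ((N:ℂ))^2 := by
    rw [inner_self_eq_norm_sq_to_K, hNv]; norm_cast
  have hN2ne : ((N:ℂ))^2 ≠ 0 := by
    intro h
    have h2 : (N:ℂ) = 0 := pow_eq_zero_iff (n := 2) (by norm_num) |>.mp h
    exact hN0.ne' (by exact_mod_cast h2)
  set d : ℂ := c / ((N:ℂ))^2 with hd
  set wv : F := u - d • ev with hwv
  have horth : ⟪ev, wv⟫_ℂ = 0 := by
    rw [hwv, inner_sub_right, inner_smul_right, hNC, ← hc, hd,
      div_mul_cancel₀ _ hN2ne, sub_self]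
  have hwv_orth : ∀ a b : ℂ, ⟪a • ev, b • wv⟫_ℂ = 0 := by
    intro a b; rw [inner_smul_left, inner_smul_right, horth]; ring
  have hu_decomp : u = d • ev + wv := by rw [hwv]; abel
  set s := ‖wv‖ with hs
  have hs0 : 0 ≤ s := norm_nonneg _
  set t := ‖c‖ with ht
  have ht0 : 0 ≤ t := norm_nonneg _
  have htN : t ≤ N := by
    have h := norm_inner_le_norm (𝕜 := ℂ) ev u
    rw [hNv, hu, mul_one] at h
    exact h
  have hdn : ‖d • ev‖ = t / N := by
    rw [norm_smul, hNv, hd, norm_div, norm_pow, cnorm, abs_of_nonneg hN0.le, ← ht]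
    field_simp
  have hkey : (t/N)^2 + s^2 = 1 := by
    have h := pyth (a := d • ev) (b := wv) (by simpa using hwv_orth d 1)
    rw [← hu_decomp, hu, hdn, ← hs] at h
    nlinarith [h]
  have hts : t^2 + N^2 * s^2 = N^2 := by
    have h := hkey
    field_simp at h
    nlinarith [h]
  have hres_decomp : (η₁:ℂ) • u - c • ev = ((η₁:ℂ) * d - c) • ev + (η₁:ℂ) • wv := by
    rw [hu_decomp, hwv]
    module
  have hpy2 : ‖((η₁:ℂ) * d - c) • ev‖^2 + ‖(η₁:ℂ) • wv‖^2 = ‖(η₁:ℂ) • u - c • ev‖^2 := by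
    rw [hres_decomp]
    exact (pyth (hwv_orth _ _)).symm
  have hwres : η₁ * s ≤ ε := by
    have hn1 : ‖(η₁:ℂ) • wv‖ = η₁ * s := by
      rw [norm_smul, cnorm, abs_of_nonneg hη0.le, hs]
    have h1 : (η₁ * s)^2 ≤ ‖(η₁:ℂ) • u - c • ev‖^2 := by
      rw [← hpy2, hn1]
      nlinarith [sq_nonneg ‖((η₁:ℂ) * d - c) • ev‖]
    nlinarith [norm_nonneg ((η₁:ℂ) • u - c • ev), mul_nonneg hη0.le hs0]
  have hs1 : s < 1 := by nlinarith
  have ht_pos : 0 < t := by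
    rcases ht0.lt_or_eq with h | h
    · exact h
    · exfalso
      rw [← h] at hts
      nlinarith [mul_pos hN0 hN0]
  have hc0 : c ≠ 0 := by
    intro h
    rw [ht, h, norm_zero] at ht_pos
    exact lt_irrefl 0 ht_pos
  refine ⟨hc0, ?_⟩
  intro φ hφeq
  have hVdecomp : ((N:ℂ)^2) • u - (φ * (N:ℂ)) • ev
      = (((N:ℂ)^2 * d - φ * (N:ℂ))) • ev + ((N:ℂ)^2) • wv := by
    rw [hu_decomp, hwv]
    module
  have hcoef : (N:ℂ)^2 * d - φ * (N:ℂ) = c - φ * (N:ℂ) := by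
    rw [hd, mul_div_cancel₀ _ hN2ne]
  have hcnorm : ‖c - φ * (N:ℂ)‖ = N - t := by
    rw [hφeq]
    have h1 : c - c / ((t:ℝ):ℂ) * (N:ℂ) = c * (((t - N : ℝ)):ℂ) / ((t:ℝ):ℂ) := by
      have h2 : ((t:ℝ):ℂ) ≠ 0 := by exact_mod_cast ht_pos.ne'
      field_simp
      ring
      exact (Complex.ofReal_sub t N).symm
    rw [h1, norm_div, norm_mul, ← ht, cnorm, cnorm,
      abs_of_nonneg ht0, abs_of_nonpos (by linarith : t - N ≤ 0)]
    rw [neg_sub, mul_comm, mul_div_assoc, div_self ht_pos.ne', mul_one]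
  have hVnorm : ‖((N:ℂ)^2) • u - (φ * (N:ℂ)) • ev‖^2 = (N-t)^2 * N^2 + N^4 * s^2 := by
    rw [hVdecomp, pyth (hwv_orth _ _), norm_smul, norm_smul, hNv, hcoef, hcnorm]
    have h3 : ‖(N:ℂ)^2‖ = N^2 := by
      rw [norm_pow, cnorm, abs_of_nonneg hN0.le]
    rw [h3, ← hs]
    ring
  have hVle : ‖((N:ℂ)^2) • u - (φ * (N:ℂ)) • ev‖^2 ≤ 8 * ε^2 := by
    have h1 : (N - t)^2 ≤ N^2 * s^2 := by nlinarith
    have h2 : N^2 * s ≤ 2 * ε := by nlinarith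
    have h3 : 0 ≤ N^2 * s := by positivity
    calc ‖((N:ℂ)^2) • u - (φ * (N:ℂ)) • ev‖^2 = (N-t)^2 * N^2 + N^4 * s^2 := hVnorm
      _ ≤ (N^2 * s^2) * N^2 + N^4 * s^2 := by nlinarith
      _ = 2 * (N^2 * s)^2 := by ring
      _ ≤ 2 * (2*ε)^2 := by nlinarith
      _ = 8 * ε^2 := by ring
  have hstep : ‖((N:ℂ)^2) • u - (φ * (N:ℂ)) • ev‖ ≤ Real.sqrt (8 * ε^2) := by
    rw [show ‖((N:ℂ)^2) • u - (φ * (N:ℂ)) • ev‖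
        = Real.sqrt (‖((N:ℂ)^2) • u - (φ * (N:ℂ)) • ev‖^2) from
      (Real.sqrt_sq (norm_nonneg _)).symm]
    exact Real.sqrt_le_sqrt hVle
  have h8 : Real.sqrt (8 * ε^2) = 2 * Real.sqrt 2 * ε := by
    rw [show (8:ℝ) * ε^2 = (2 * Real.sqrt 2 * ε)^2 by
      nlinarith [Real.sq_sqrt (by norm_num : (0:ℝ) ≤ 2)]]
    exact Real.sqrt_sq (by positivity)
  rw [h8] at hstep
  exact hstep

theorem stmt_10 {n : ℕ}
    (X : Matrix (Fin n) (Fin n) ℂ) (hX : X.IsHermitian)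
    (v : Fin n → ℂ) (hv : v ≠ 0)
    -- assumption : ‖X − v v*‖ < ‖v‖² / 2
    (hclose : specNorm (X - outer v) < euclNorm v ^ 2 / 2)
    -- η₁ the largest eigenvalue of X, x₁ an associated unit-norm eigenvector
    (η₁ : ℝ) (x₁ : Fin n → ℂ) (hx₁ : euclNorm x₁ = 1)
    (heig : X.mulVec x₁ = (η₁ : ℂ) • x₁)
    (htop : ∀ (c : ℝ) (w : Fin n → ℂ), w ≠ 0 → X.mulVec w = (c : ℂ) • w → c ≤ η₁)
    -- x = x₁ · ‖v‖
    (x : Fin n → ℂ) (hx : x = fun i => (euclNorm v : ℂ) * x₁ i) :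
    ∃ α ∈ Set.Ico (0 : ℝ) (2 * Real.pi),
      euclNorm (fun i => (euclNorm x : ℂ) * x i
          - Complex.exp (Complex.I * α) * ((euclNorm v : ℂ) * v i)) ≤
        2 * Real.sqrt 2 * specNorm (X - outer v) := by
  classical
  let e : (Fin n → ℂ) ≃ₗ[ℂ] EuclideanSpace ℂ (Fin n) := (WithLp.linearEquiv 2 ℂ (Fin n → ℂ)).symm
  have enorm_eq : ∀ y : Fin n → ℂ, euclNorm y = ‖e y‖ := by
    intro y; rw [euclNorm, EuclideanSpace.norm_eq]; rfl
  have inner_eq : ∀ a b : Fin n → ℂ, ⟪e a, e b⟫_ℂ = ∑ j, (starRingEnd ℂ) (a j) * b j := by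
    intro a b; simp [PiLp.inner_apply, RCLike.inner_apply]; exact Finset.sum_congr rfl fun j _ => mul_comm _ _
  set ε := specNorm (X - outer v) with hεdef
  have hε0 : 0 ≤ ε := norm_nonneg _
  set N := euclNorm v with hNdef
  have hN0 : 0 < N := by
    rw [hNdef, enorm_eq]
    exact norm_pos_iff.mpr (fun h => hv (by simpa using congrArg e.symm h))
  have hNv : ‖e v‖ = N := (enorm_eq v).symm
  -- operator norm bound
  have hop : ∀ y : Fin n → ℂ, ‖e ((X - outer v).mulVec y)‖ ≤ ε * ‖e y‖ := by
    intro y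
    exact (LinearMap.toContinuousLinearMap (Matrix.toEuclideanLin (X - outer v))).le_opNorm (e y)
  -- outer mulVec formula
  have houter : ∀ y : Fin n → ℂ, (outer v).mulVec y = (∑ j, (starRingEnd ℂ) (v j) * y j) • v := by
    intro y; funext i
    simp only [outer, Matrix.mulVec, dotProduct, Matrix.of_apply, Pi.smul_apply,
      smul_eq_mul]
    rw [Finset.sum_mul]
    exact Finset.sum_congr rfl fun j _ => by ring
  have houterE : ∀ y : Fin n → ℂ, e ((outer v).mulVec y) = (⟪e v, e y⟫_ℂ) • e v := by
    intro y; rw [houter y, map_smul, inner_eq]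
  -- step B : η₁ ≥ N^2 - ε
  haveI : Nontrivial (EuclideanSpace ℂ (Fin n)) :=
    ⟨e v, 0, fun h => hv (by simpa using congrArg e.symm h)⟩
  set S := Matrix.toEuclideanLin X with hSdef
  have hS : S.IsSymmetric := Matrix.isHermitian_iff_isSymmetric.mp hX
  have hSapp : ∀ y : Fin n → ℂ, S (e y) = e (X.mulVec y) := fun y => rfl
  set μ := ⨆ z : {z : EuclideanSpace ℂ (Fin n) // z ≠ 0},
      RCLike.re (⟪S z, z⟫_ℂ) / ‖(z : EuclideanSpace ℂ (Fin n))‖ ^ 2 with hμdef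
  have hEig : Module.End.HasEigenvalue S ((μ : ℝ) : ℂ) :=
    hS.hasEigenvalue_iSup_of_finiteDimensional
  obtain ⟨w₀, hw₀⟩ := hEig.exists_hasEigenvector
  have hw0 : e.symm w₀ ≠ 0 := fun h => hw₀.2 (by simpa using congrArg e h)
  have hwe : X.mulVec (e.symm w₀) = ((μ : ℝ) : ℂ) • e.symm w₀ := by
    apply e.injective
    have h1 : S w₀ = ((μ : ℝ) : ℂ) • w₀ := hw₀.apply_eq_smul
    rw [map_smul]
    calc e (X.mulVec (e.symm w₀)) = S (e (e.symm w₀)) := (hSapp _).symm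
      _ = S w₀ := by rw [e.apply_symm_apply]
      _ = ((μ : ℝ) : ℂ) • w₀ := h1
      _ = ((μ : ℝ) : ℂ) • (e (e.symm w₀)) := by rw [e.apply_symm_apply]
  have hμη : μ ≤ η₁ := htop μ _ hw0 hwe
  have hbdd : BddAbove (Set.range fun z : {z : EuclideanSpace ℂ (Fin n) // z ≠ 0} =>
      RCLike.re (⟪S z, z⟫_ℂ) / ‖(z : EuclideanSpace ℂ (Fin n))‖ ^ 2) := by
    refine ⟨‖LinearMap.toContinuousLinearMap S‖, ?_⟩
    rintro r ⟨⟨y, hy⟩, rfl⟩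
    have hyn : 0 < ‖y‖ := norm_pos_iff.mpr hy
    have h1 : RCLike.re (⟪S y, y⟫_ℂ) ≤ ‖S y‖ * ‖y‖ :=
      le_trans (RCLike.re_le_norm _) (norm_inner_le_norm _ _)
    have h2 : ‖S y‖ ≤ ‖LinearMap.toContinuousLinearMap S‖ * ‖y‖ :=
      (LinearMap.toContinuousLinearMap S).le_opNorm y
    simp only
    rw [div_le_iff₀ (by positivity)]
    calc RCLike.re (⟪S y, y⟫_ℂ) ≤ ‖S y‖ * ‖y‖ := h1
      _ ≤ ‖LinearMap.toContinuousLinearMap S‖ * ‖y‖ * ‖y‖ := by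
        nlinarith [norm_nonneg (S y), norm_nonneg (LinearMap.toContinuousLinearMap S)]
      _ = ‖LinearMap.toContinuousLinearMap S‖ * ‖y‖ ^ 2 := by ring
  have hrayleigh : N ^ 2 - ε ≤ μ := by
    have hvne : e v ≠ (0 : EuclideanSpace ℂ (Fin n)) :=
      fun h => hv (by simpa using congrArg e.symm h)
    have hle := le_ciSup hbdd ⟨e v, hvne⟩
    simp only at hle
    have hdecomp : S (e v) = (⟪e v, e v⟫_ℂ) • e v + e ((X - outer v).mulVec v) := by
      rw [hSapp]
      have h3 : X.mulVec v = (outer v).mulVec v + (X - outer v).mulVec v := by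
        rw [Matrix.sub_mulVec]; abel
      rw [h3, map_add, houterE]
    have h1 : RCLike.re (⟪(⟪e v, e v⟫_ℂ) • e v, e v⟫_ℂ) = N^2 * N^2 := by
      rw [inner_smul_left, inner_self_eq_norm_sq_to_K, hNv]
      simp only [map_pow, RCLike.conj_ofReal, Complex.conj_ofReal]
      norm_cast
    have h2 : -(ε * N^2) ≤ RCLike.re (⟪e ((X - outer v).mulVec v), e v⟫_ℂ) := by
      have hn : ‖⟪e ((X - outer v).mulVec v), e v⟫_ℂ‖ ≤ ε * N^2 := by
        calc ‖⟪e ((X - outer v).mulVec v), e v⟫_ℂ‖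
            ≤ ‖e ((X - outer v).mulVec v)‖ * ‖e v‖ := norm_inner_le_norm _ _
          _ ≤ (ε * ‖e v‖) * ‖e v‖ := mul_le_mul_of_nonneg_right (hop v) (norm_nonneg _)
          _ = ε * N^2 := by rw [hNv]; ring
      have habs := RCLike.abs_re_le_norm (⟪e ((X - outer v).mulVec v), e v⟫_ℂ)
      have := neg_abs_le (RCLike.re (⟪e ((X - outer v).mulVec v), e v⟫_ℂ))
      linarith
    have hinner : N^2 * N^2 - ε * N^2 ≤ RCLike.re (⟪S (e v), e v⟫_ℂ) := by
      rw [hdecomp, inner_add_left, map_add, h1]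
      linarith
    have hle2 : N ^ 2 - ε ≤ RCLike.re (⟪S (e v), e v⟫_ℂ) / ‖e v‖ ^ 2 := by
      rw [hNv, le_div_iff₀ (by positivity)]
      nlinarith
    exact hle2.trans (by rw [hNv] at hle ⊢; exact hle)
  have hη : N^2 - ε ≤ η₁ := hrayleigh.trans hμη
  have hη2 : N^2 ≤ 2 * η₁ := by nlinarith
  have hη0 : 0 < η₁ := by nlinarith
  have hεη : ε < η₁ := by nlinarith
  -- step C : residual decomposition
  set u : EuclideanSpace ℂ (Fin n) := e x₁ with hu_def
  have hu : ‖u‖ = 1 := by rw [← enorm_eq]; exact hx₁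
  set c : ℂ := ⟪e v, u⟫_ℂ with hc
  have hex : euclNorm x = N := by
    have h1 : e x = ((N:ℝ):ℂ) • u := by rw [hx]; rfl
    rw [enorm_eq, h1, norm_smul, hu, mul_one, cnorm, abs_of_nonneg hN0.le]
  have hgoalvec : ∀ φ : ℂ, e (fun i => (euclNorm x : ℂ) * x i - φ * ((N:ℂ) * v i))
      = ((N:ℂ)^2) • u - (φ * (N:ℂ)) • e v := by
    intro φ
    apply PiLp.ext
    intro i
    have h1 : (e (fun i => (euclNorm x : ℂ) * x i - φ * ((N:ℂ) * v i))) i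
        = (euclNorm x : ℂ) * x i - φ * ((N:ℂ) * v i) := rfl
    have h2 : (((N:ℂ)^2) • u - (φ * (N:ℂ)) • e v) i
        = (N:ℂ)^2 * x₁ i - (φ * (N:ℂ)) * v i := rfl
    rw [h1, h2, hex, hx]
    ring
  have hres : ‖(η₁:ℂ) • u - c • e v‖ ≤ ε := by
    have h := hop x₁
    have h2 : e ((X - outer v).mulVec x₁) = (η₁:ℂ) • u - c • e v := by
      rw [Matrix.sub_mulVec, map_sub, heig, map_smul, houterE]
    rw [h2] at h
    calc ‖(η₁:ℂ) • u - c • e v‖ ≤ ε * ‖e x₁‖ := h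
      _ = ε := by rw [show ‖e x₁‖ = 1 from hu, mul_one]
  have hkey := key_bound (e v) u N ε η₁ hN0 hNv hu hε0 hclose hη (by rw [← hc]; exact hres)
  obtain ⟨hc0, H⟩ := hkey
  rw [← hc] at hc0
  have ht_pos : 0 < ‖c‖ := norm_pos_iff.mpr hc0
  set θ := Complex.arg c with hθ
  have hexpθ : Complex.exp (Complex.I * θ) = c / ((‖c‖:ℝ):ℂ) := by
    have h1 := Complex.norm_mul_exp_arg_mul_I c
    rw [← hθ] at h1
    have htabs : ((‖c‖ : ℝ) : ℂ) = ((‖c‖:ℝ):ℂ) := rfl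
    rw [eq_div_iff (by exact_mod_cast ht_pos.ne' : ((‖c‖:ℝ):ℂ) ≠ 0)]
    rw [mul_comm (Complex.exp _) _, ← htabs, mul_comm Complex.I _]
    exact_mod_cast h1
  refine ⟨if θ < 0 then θ + 2*Real.pi else θ, ?_, ?_⟩
  · have hπ := Real.pi_pos
    have h1 := Complex.neg_pi_lt_arg c
    have h2 := Complex.arg_le_pi c
    rw [← hθ] at h1 h2
    by_cases hneg : θ < 0 <;> simp only [hneg, if_true, if_false, Set.mem_Ico] <;>
      constructor <;> linarith
  · have hexp : Complex.exp (Complex.I * ((if θ < 0 then θ + 2*Real.pi else θ : ℝ) : ℂ))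
        = c / ((‖c‖:ℝ):ℂ) := by
      by_cases hneg : θ < 0
      · rw [if_pos hneg]
        rw [show Complex.I * ((θ + 2*Real.pi : ℝ):ℂ) = Complex.I * (θ:ℝ) + 2*Real.pi*Complex.I by
          push_cast; ring]
        rw [Complex.exp_add, Complex.exp_two_pi_mul_I, mul_one, hexpθ]
      · rw [if_neg hneg]
        exact hexpθ
    have hHφ := H _ hexp
    calc euclNorm (fun i => (euclNorm x : ℂ) * x i
          - Complex.exp (Complex.I * ((if θ < 0 then θ + 2*Real.pi else θ : ℝ) : ℂ)) * ((N:ℂ) * v i))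
        = ‖((N:ℂ)^2) • u - (Complex.exp (Complex.I *
            ((if θ < 0 then θ + 2*Real.pi else θ : ℝ) : ℂ)) * (N:ℂ)) • e v‖ := by
          rw [enorm_eq, hgoalvec]
      _ ≤ 2 * Real.sqrt 2 * ε := hHφ
end

section
/- Let X ∈ ℂ^{n×n} be Hermitian and v ∈ ℂⁿ be such that ‖X − v v*‖ < ‖v‖²/2 in spectral norm. Let η₁ be the largest eigenvalue of X, x₁ an associated unit-norm eigenvector, and set x = x₁·√η₁ (η₁ > 0 under the stated assumption). Then ‖x·‖x‖ − e^{iα}·v·‖v‖‖ ≤ 2√2·‖X − v v*‖ for some α ∈ [0, 2π). -/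
open scoped BigOperators

/-- Euclidean norm of a complex vector. -/
noncomputable def cenorm {n : ℕ} (x : Fin n → ℂ) : ℝ := Real.sqrt (∑ i, ‖x i‖ ^ 2)

/-- Identity reinterpretation of a vector as an element of Euclidean space. -/
def toE {n : ℕ} (v : Fin n → ℂ) : EuclideanSpace ℂ (Fin n) := WithLp.toLp 2 v

lemma cenorm_eq_norm {n : ℕ} (w : Fin n → ℂ) : cenorm w = ‖toE w‖ := by
  rw [EuclideanSpace.norm_eq]; rfl

lemma specNorm_bound {n : ℕ} (M : Matrix (Fin n) (Fin n) ℂ) (w : Fin n → ℂ) :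
    ‖toE (M.mulVec w)‖ ≤ specNorm M * ‖toE w‖ :=
  (LinearMap.toContinuousLinearMap (Matrix.toEuclideanLin M)).le_opNorm (toE w)

lemma innerE {n : ℕ} (v w : Fin n → ℂ) :
    inner (𝕜 := ℂ) (toE v) (toE w) = ∑ j, (starRingEnd ℂ) (v j) * w j :=
  by rw [PiLp.inner_apply]; exact Finset.sum_congr rfl fun j _ => by simp [toE, mul_comm]

lemma outer_mulVec {n : ℕ} (v w : Fin n → ℂ) :
    (outer v).mulVec w = (inner (𝕜 := ℂ) (toE v) (toE w)) • v := by
  rw [innerE]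
  funext i
  simp only [outer, Matrix.mulVec, dotProduct, Matrix.of_apply, Pi.smul_apply,
    smul_eq_mul, Finset.sum_mul]
  exact Finset.sum_congr rfl fun j _ => by ring

lemma key_numeric (η₁ τ b ε : ℝ) (hτ0 : 0 < τ) (hε0 : 0 ≤ ε) (hclose : ε < τ^2/2)
    (hη_low : τ^2 - ε ≤ η₁) (hb0 : 0 ≤ b) (hb_le : b ≤ τ) (hb2 : η₁ - ε ≤ b^2)
    (hP : η₁^2 + b^2*τ^2 - 2*η₁*b^2 ≤ ε^2) :
    η₁^2 - 2*(η₁*τ*b) + τ^4 ≤ 8*ε^2 := by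
  have h2e : τ^2 - b^2 ≤ 2*ε := by nlinarith
  have ht1 : τ*(τ-b) ≤ 2*ε := by nlinarith [mul_nonneg hb0 (sub_nonneg.mpr hb_le)]
  have ht2 : b*(τ-b) ≤ ε := by nlinarith [sq_nonneg (τ-b)]
  have hA : τ^2*(τ-b)^2 ≤ 4*ε^2 := by
    nlinarith [ht1, mul_nonneg hτ0.le (sub_nonneg.mpr hb_le), hε0]
  have hB : 2*ε*(b*(τ-b)) ≤ 2*ε^2 := by nlinarith [ht2, hε0]
  have hDpos : 0 ≤ (η₁ - τ^2 + ε) * (b*(τ-b)) :=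
    mul_nonneg (by linarith) (mul_nonneg hb0 (by linarith))
  nlinarith [hP, hA, hB, hDpos, sq_nonneg ε]

set_option maxHeartbeats 1000000 in
theorem stmt_11 {n : ℕ}
    (X : Matrix (Fin n) (Fin n) ℂ) (hX : X.IsHermitian)
    (v : Fin n → ℂ) (hv : v ≠ 0)
    -- assumption : ‖X − v v*‖ < ‖v‖² / 2
    (hclose : specNorm (X - outer v) < cenorm v ^ 2 / 2)
    -- η₁ the largest eigenvalue of X, x₁ an associated unit-norm eigenvector
    (η₁ : ℝ) (x₁ : Fin n → ℂ) (hx₁ : cenorm x₁ = 1)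
    (heig : X.mulVec x₁ = (η₁ : ℂ) • x₁)
    (htop : ∀ (c : ℝ) (w : Fin n → ℂ), w ≠ 0 → X.mulVec w = (c : ℂ) • w → c ≤ η₁)
    -- x = x₁ · √η₁ (η₁ > 0 under the stated assumption)
    (x : Fin n → ℂ) (hx : x = fun i => (Real.sqrt η₁ : ℂ) * x₁ i) :
    ∃ α ∈ Set.Ico (0 : ℝ) (2 * Real.pi),
      cenorm (fun i => (cenorm x : ℂ) * x i
          - Complex.exp (Complex.I * α) * ((cenorm v : ℂ) * v i)) ≤
        2 * Real.sqrt 2 * specNorm (X - outer v) := by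
  classical
  set ε := specNorm (X - outer v) with hεdef
  have hε0 : 0 ≤ ε := norm_nonneg _
  set τ := cenorm v with hτdef
  have hτnorm : τ = ‖toE v‖ := cenorm_eq_norm v
  have hVn : toE v ≠ 0 := fun h => hv (congrArg WithLp.ofLp h)
  have hτ0 : 0 < τ := hτnorm ▸ norm_pos_iff.mpr hVn
  have hclose' : ε < τ ^ 2 / 2 := hclose
  have hx₁E : ‖toE x₁‖ = 1 := by rw [← cenorm_eq_norm]; exact hx₁
  have hx₁ne : toE x₁ ≠ 0 := by
    intro h; rw [h, norm_zero] at hx₁E; norm_num at hx₁E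
  -- Rayleigh quotient step : τ² - ε ≤ η₁
  have : Nontrivial (EuclideanSpace ℂ (Fin n)) := ⟨⟨toE x₁, 0, hx₁ne⟩⟩
  set T : EuclideanSpace ℂ (Fin n) →ₗ[ℂ] EuclideanSpace ℂ (Fin n) := Matrix.toEuclideanLin X with hT
  have hsym : T.IsSymmetric := Matrix.isHermitian_iff_isSymmetric.1 hX
  have hRayleigh : RCLike.re (inner (𝕜 := ℂ) (T (toE v)) (toE v)) / ‖toE v‖ ^ 2 ≤ η₁ := by
    set μ : ℝ := ⨆ y : { y : EuclideanSpace ℂ (Fin n) // y ≠ 0 },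
        RCLike.re (inner (𝕜 := ℂ) (T y) y) / ‖(y : EuclideanSpace ℂ (Fin n))‖ ^ 2 with hμdef
    have hev : Module.End.HasEigenvalue T (μ : ℂ) := hsym.hasEigenvalue_iSup_of_finiteDimensional
    obtain ⟨w, hw⟩ := hev.exists_hasEigenvector
    have hμle : μ ≤ η₁ := htop μ w (fun h => hw.2 (congrArg (WithLp.toLp 2) h)) (congrArg WithLp.ofLp hw.apply_eq_smul)
    have hbdd : BddAbove (Set.range fun y : { y : EuclideanSpace ℂ (Fin n) // y ≠ 0 } =>
        RCLike.re (inner (𝕜 := ℂ) (T y) y) / ‖(y : EuclideanSpace ℂ (Fin n))‖ ^ 2) := by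
      refine ⟨‖LinearMap.toContinuousLinearMap T‖, ?_⟩
      rintro r ⟨⟨y, hy⟩, rfl⟩
      have hy0 : (0:ℝ) < ‖y‖ ^ 2 := pow_pos (norm_pos_iff.mpr hy) 2
      rw [div_le_iff₀ hy0]
      calc RCLike.re (inner (𝕜 := ℂ) (T y) y) ≤ ‖inner (𝕜 := ℂ) (T y) y‖ := RCLike.re_le_norm _
        _ ≤ ‖T y‖ * ‖y‖ := norm_inner_le_norm _ _
        _ = ‖LinearMap.toContinuousLinearMap T y‖ * ‖y‖ := rfl
        _ ≤ (‖LinearMap.toContinuousLinearMap T‖ * ‖y‖) * ‖y‖ := by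
            gcongr; exact (LinearMap.toContinuousLinearMap T).le_opNorm y
        _ = ‖LinearMap.toContinuousLinearMap T‖ * ‖y‖ ^ 2 := by ring
    exact le_trans (le_ciSup hbdd ⟨toE v, hVn⟩) hμle
  -- compute the Rayleigh quotient at v
  have hTv : T (toE v) = toE ((X - outer v).mulVec v) + (inner (𝕜 := ℂ) (toE v) (toE v)) • toE v := by
    have h1 : X.mulVec v = (X - outer v).mulVec v + (outer v).mulVec v := by
      rw [Matrix.sub_mulVec]; ring_nf
    have h2 : T (toE v) = toE (X.mulVec v) := rfl
    rw [h2, h1, outer_mulVec]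
    rfl
  have hinner_vv : (inner (𝕜 := ℂ) (toE v) (toE v)) = ((τ^2 : ℝ) : ℂ) := by
    rw [inner_self_eq_norm_sq_to_K, hτnorm]; norm_cast
  have hEv_bound : ‖toE ((X - outer v).mulVec v)‖ ≤ ε * τ := by
    rw [hτnorm]; exact specNorm_bound _ _
  have hre_Tv : τ^4 - ε * τ^2 ≤ RCLike.re (inner (𝕜 := ℂ) (T (toE v)) (toE v)) := by
    rw [hTv, inner_add_left, inner_smul_left, hinner_vv, map_add]
    have e1 : RCLike.re ((starRingEnd ℂ) (((τ^2 : ℝ) : ℂ)) * ((τ^2 : ℝ) : ℂ)) = τ^4 := by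
      rw [Complex.conj_ofReal, ← Complex.ofReal_mul]
      rw [show RCLike.re (((τ^2 * τ^2 : ℝ)) : ℂ) = τ^2 * τ^2 from Complex.ofReal_re _]
      ring
    have e2 : -(ε * τ^2) ≤ RCLike.re (inner (𝕜 := ℂ) (toE ((X - outer v).mulVec v)) (toE v)) := by
      have h3 : ‖inner (𝕜 := ℂ) (toE ((X - outer v).mulVec v)) (toE v)‖ ≤ (ε * τ) * τ := by
        calc ‖inner (𝕜 := ℂ) (toE ((X - outer v).mulVec v)) (toE v)‖
            ≤ ‖toE ((X - outer v).mulVec v)‖ * ‖toE v‖ := norm_inner_le_norm _ _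
          _ ≤ (ε * τ) * τ := by rw [← hτnorm]; exact mul_le_mul_of_nonneg_right hEv_bound hτ0.le
      have habs := abs_le.mp (le_trans (RCLike.abs_re_le_norm
        (inner (𝕜 := ℂ) (toE ((X - outer v).mulVec v)) (toE v))) h3)
      nlinarith [habs.1]
    rw [e1]
    linarith [e2]
  have hη_low : τ^2 - ε ≤ η₁ := by
    have h6 : RCLike.re (inner (𝕜 := ℂ) (T (toE v)) (toE v)) ≤ η₁ * ‖toE v‖^2 := by
      have := hRayleigh
      rw [div_le_iff₀ (pow_pos (norm_pos_iff.mpr hVn) 2)] at this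
      linarith
    rw [← hτnorm] at h6
    have hτ2 : (0:ℝ) < τ^2 := pow_pos hτ0 2
    nlinarith [hre_Tv]
  have hη₁pos : 0 < η₁ := by nlinarith [pow_pos hτ0 2]
  set a : ℂ := inner (𝕜 := ℂ) (toE v) (toE x₁) with hadef
  set b : ℝ := ‖a‖ with hbdef
  have hb0 : 0 ≤ b := norm_nonneg a
  have hb_le : b ≤ τ := by
    have h := norm_inner_le_norm (𝕜 := ℂ) (toE v) (toE x₁)
    rw [hx₁E, mul_one, ← hτnorm] at h
    exact h
  have hEx1 : toE ((X - outer v).mulVec x₁) = (η₁ : ℂ) • toE x₁ - a • toE v := by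
    have h1 : (X - outer v).mulVec x₁ = (η₁:ℂ) • x₁ - a • v := by
      rw [Matrix.sub_mulVec, heig, outer_mulVec]
    rw [h1]; rfl
  have hExn : ‖(η₁ : ℂ) • toE x₁ - a • toE v‖ ≤ ε := by
    rw [← hEx1]
    have h := specNorm_bound (X - outer v) x₁
    rwa [hx₁E, mul_one] at h
  have hconj : a * (starRingEnd ℂ) a = ((b^2 : ℝ) : ℂ) := by
    rw [Complex.mul_conj, hbdef, Complex.normSq_eq_norm_sq]
  have hnormsm : ‖(η₁:ℂ) • toE x₁‖ = η₁ := by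
    rw [norm_smul, hx₁E, mul_one, Complex.norm_real, Real.norm_eq_abs, abs_of_pos hη₁pos]
  have hXX : inner (𝕜:=ℂ) (toE x₁) (toE x₁) = 1 := by
    rw [inner_self_eq_norm_sq_to_K, hx₁E]; norm_num
  have hXV : inner (𝕜:=ℂ) (toE x₁) (toE v) = (starRingEnd ℂ) a :=
    (inner_conj_symm (toE x₁) (toE v)).symm
  have hinner_x1 : inner (𝕜 := ℂ) (toE x₁) ((η₁ : ℂ) • toE x₁ - a • toE v)
      = ((η₁ - b^2 : ℝ) : ℂ) := by
    rw [inner_sub_right, inner_smul_right, inner_smul_right, hXX, hXV, hconj]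
    push_cast; ring
  have hb2 : η₁ - ε ≤ b^2 := by
    have h1 : ‖inner (𝕜:=ℂ) (toE x₁) ((η₁:ℂ) • toE x₁ - a • toE v)‖ ≤ 1 * ε := by
      calc ‖inner (𝕜:=ℂ) (toE x₁) ((η₁:ℂ) • toE x₁ - a • toE v)‖
          ≤ ‖toE x₁‖ * ‖(η₁:ℂ) • toE x₁ - a • toE v‖ := norm_inner_le_norm _ _
        _ ≤ 1 * ε := by rw [hx₁E]; exact mul_le_mul_of_nonneg_left hExn (by norm_num)
    rw [hinner_x1, Complex.norm_real, Real.norm_eq_abs, one_mul] at h1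
    have := abs_le.mp h1
    linarith [this.1]
  have hbpos : 0 < b := by
    rcases eq_or_lt_of_le hb0 with h | h
    · exfalso; rw [← h] at hb2; nlinarith [pow_pos hτ0 2]
    · exact h
  have hP : η₁^2 + b^2*τ^2 - 2*η₁*b^2 ≤ ε^2 := by
    have hsq : ‖(η₁:ℂ) • toE x₁ - a • toE v‖^2 ≤ ε^2 :=
      pow_le_pow_left₀ (norm_nonneg _) hExn 2
    rw [norm_sub_sq (𝕜 := ℂ)] at hsq
    have p2 : ‖a • toE v‖ = b * τ := by
      rw [norm_smul, ← hτnorm, ← hbdef]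
    have p3 : RCLike.re (inner (𝕜:=ℂ) ((η₁:ℂ) • toE x₁) (a • toE v)) = η₁ * b^2 := by
      rw [inner_smul_left, inner_smul_right, Complex.conj_ofReal, hXV]
      rw [show ((η₁:ℂ) * (a * (starRingEnd ℂ) a)) = ((η₁ * b^2 : ℝ) : ℂ) from by
        rw [hconj]; push_cast; ring]
      exact Complex.ofReal_re _
    rw [hnormsm, p2, p3] at hsq
    nlinarith [hsq]
  -- phase
  set θ := Complex.arg a with hθdef
  set α := if 0 ≤ θ then θ else θ + 2*Real.pi with hαdef
  have hπ := Real.pi_pos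
  have hαmem : α ∈ Set.Ico (0:ℝ) (2*Real.pi) := by
    have h1 : θ ≤ Real.pi := Complex.arg_le_pi a
    have h2 : -Real.pi < θ := Complex.neg_pi_lt_arg a
    rw [hαdef]; split_ifs with h
    · exact ⟨h, by linarith⟩
    · push_neg at h
      exact ⟨by linarith, by linarith⟩
  set φ := Complex.exp (Complex.I * α) with hφdef
  have hφ : φ = Complex.exp ((θ:ℂ) * Complex.I) := by
    rw [hφdef, hαdef]
    split_ifs
    · rw [mul_comm]
    · push_cast
      rw [show Complex.I * ((θ:ℂ) + 2*(Real.pi:ℂ)) = (θ:ℂ)*Complex.I + 2*(Real.pi:ℂ)*Complex.I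
          from by ring, Complex.exp_add, Complex.exp_two_pi_mul_I, mul_one]
  have hφb : φ * ((b:ℝ):ℂ) = a := by
    rw [hφ, mul_comm]
    exact Complex.norm_mul_exp_arg_mul_I a
  have hφabs : ‖φ‖ = 1 := by
    rw [hφ]; exact Complex.norm_exp_ofReal_mul_I θ
  have hφnorm : ‖φ‖ = 1 := hφabs
  have hφconj : φ * (starRingEnd ℂ) a = ((b:ℝ):ℂ) := by
    have h1 : (starRingEnd ℂ) a = (starRingEnd ℂ) φ * ((b:ℝ):ℂ) := by
      rw [← hφb, map_mul, Complex.conj_ofReal]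
    rw [h1, ← mul_assoc, Complex.mul_conj, Complex.normSq_eq_norm_sq, hφabs]
    norm_num
  -- the goal vector
  refine ⟨α, hαmem, ?_⟩
  have hsum1 : ∑ i, ‖x₁ i‖ ^ 2 = 1 := by
    have h := hx₁
    unfold cenorm at h
    have hnn : (0:ℝ) ≤ ∑ i, ‖x₁ i‖ ^ 2 := Finset.sum_nonneg fun i _ => sq_nonneg _
    nlinarith [Real.sq_sqrt hnn, h]
  have henx : cenorm x = Real.sqrt η₁ := by
    rw [hx]; unfold cenorm
    have h : ∀ i : Fin n, ‖((Real.sqrt η₁ : ℝ):ℂ) * x₁ i‖^2 = η₁ * ‖x₁ i‖^2 := by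
      intro i
      rw [norm_mul, mul_pow, Complex.norm_real, Real.norm_eq_abs,
        abs_of_nonneg (Real.sqrt_nonneg _), Real.sq_sqrt hη₁pos.le]
    simp_rw [h, ← Finset.mul_sum, hsum1, mul_one]
  have hfun : (fun i => (cenorm x : ℂ) * x i - Complex.exp (Complex.I * α) * ((cenorm v : ℂ) * v i))
      = (((η₁ : ℂ) • toE x₁ - (φ * (τ:ℂ)) • toE v : EuclideanSpace ℂ (Fin n)) : Fin n → ℂ) := by
    funext i
    show (cenorm x : ℂ) * x i - φ * ((τ:ℂ) * v i) = (η₁:ℂ) * x₁ i - (φ * (τ:ℂ)) * v i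
    rw [henx, hx]
    have hss : ((Real.sqrt η₁ : ℝ):ℂ) * ((Real.sqrt η₁ : ℝ):ℂ) = (η₁:ℂ) := by
      rw [← Complex.ofReal_mul, Real.mul_self_sqrt hη₁pos.le]
    simp only []
    linear_combination (x₁ i) * hss
  have hD2 : ‖(η₁ : ℂ) • toE x₁ - (φ * (τ:ℂ)) • toE v‖^2 = η₁^2 - 2*(η₁*τ*b) + τ^4 := by
    rw [norm_sub_sq (𝕜 := ℂ)]
    have q2 : ‖(φ * (τ:ℂ)) • toE v‖ = τ * τ := by
      rw [norm_smul, ← hτnorm, norm_mul, hφnorm, one_mul, Complex.norm_real,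
        Real.norm_eq_abs, abs_of_pos hτ0]
    have q3 : RCLike.re (inner (𝕜:=ℂ) ((η₁:ℂ) • toE x₁) ((φ * (τ:ℂ)) • toE v)) = η₁*τ*b := by
      rw [inner_smul_left, inner_smul_right, Complex.conj_ofReal, hXV]
      rw [show ((η₁:ℂ) * (φ * (τ:ℂ) * (starRingEnd ℂ) a)) = ((η₁*τ:ℝ):ℂ) * (φ * (starRingEnd ℂ) a)
          from by push_cast; ring, hφconj, ← Complex.ofReal_mul]
      exact Complex.ofReal_re _
    rw [hnormsm, q2, q3]; ring
  have hD2le : ‖(η₁ : ℂ) • toE x₁ - (φ * (τ:ℂ)) • toE v‖^2 ≤ 8*ε^2 := by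
    rw [hD2]; exact key_numeric η₁ τ b ε hτ0 hε0 hclose' hη_low hb0 hb_le hb2 hP
  calc cenorm (fun i => (cenorm x : ℂ) * x i
          - Complex.exp (Complex.I * α) * ((cenorm v : ℂ) * v i))
      = ‖(η₁ : ℂ) • toE x₁ - (φ * (τ:ℂ)) • toE v‖ := by
        rw [hfun]; exact cenorm_eq_norm _
    _ = Real.sqrt (‖(η₁ : ℂ) • toE x₁ - (φ * (τ:ℂ)) • toE v‖^2) :=
        (Real.sqrt_sq (norm_nonneg _)).symm
    _ ≤ Real.sqrt (8*ε^2) := Real.sqrt_le_sqrt hD2le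
    _ = 2 * Real.sqrt 2 * ε := by
        rw [show (8:ℝ)*ε^2 = (2*Real.sqrt 2*ε)^2 from by
          nlinarith [Real.sq_sqrt (by norm_num : (0:ℝ) ≤ 2)]]
        exact Real.sqrt_sq (by positivity)
end

section
/- Let M and M̃ be Hermitian n×n complex matrices with ‖M − M̃‖ ≤ δ in spectral norm, and let v₁ be a unit vector with M v₁ = 0. Let λ̃₁ ≤ λ̃₂ ≤ … ≤ λ̃_n be the eigenvalues of M̃ with orthonormal eigenvectors ṽ₁, …, ṽ_n, and assume 0 < λ̃₂ ≤ |λ̃_k| for all k ≥ 2. Then Σ_{k≥2} |⟨ṽ_k, v₁⟩|² ≤ δ²/λ̃₂², hence |⟨ṽ₁, v₁⟩|² ≥ 1 − δ²/λ̃₂², and if additionally δ ≤ λ̃₂ then ‖v₁ − e^{iα} ṽ₁‖ ≤ √2·δ/λ̃₂ for some α ∈ [0, 2π). -/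
open scoped BigOperators
set_option synthInstance.maxHeartbeats 400000
set_option maxHeartbeats 1600000

/-- Euclidean norm of a complex vector. -/
noncomputable def cvecNorm {n : ℕ} (x : Fin n → ℂ) : ℝ := Real.sqrt (∑ i, ‖x i‖ ^ 2)

lemma sq_enorm {n : ℕ} (x : Fin n → ℂ) : cvecNorm x ^ 2 = ∑ i, ‖x i‖ ^ 2 :=
  Real.sq_sqrt (Finset.sum_nonneg fun i _ => sq_nonneg _)

lemma mulVec_enorm_le {n : ℕ} (N : Matrix (Fin n) (Fin n) ℂ) (x : Fin n → ℂ) :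
    cvecNorm (N.mulVec x) ≤ specNorm N * cvecNorm x := by
  have h := (LinearMap.toContinuousLinearMap (Matrix.toEuclideanLin N)).le_opNorm
    ((WithLp.equiv 2 (Fin n → ℂ)).symm x)
  rw [LinearMap.coe_toContinuousLinearMap', WithLp.equiv_symm_apply,
    Matrix.toEuclideanLin_apply_piLp_toLp] at h
  rw [EuclideanSpace.norm_eq, EuclideanSpace.norm_eq] at h
  simpa [cvecNorm, specNorm] using h

lemma norm_sq_cast (z : ℂ) : ((‖z‖ ^ 2 : ℝ) : ℂ) = (starRingEnd ℂ) z * z := by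
  rw [← Complex.normSq_eq_conj_mul_self, Complex.normSq_eq_norm_sq]

lemma parseval {n : ℕ} (vt : Fin n → Fin n → ℂ)
    (hortho : ∀ k l, dotProduct (star (vt k)) (vt l) = if k = l then 1 else 0)
    (x : Fin n → ℂ) :
    ∑ k, ‖dotProduct (star (vt k)) x‖ ^ 2 = ∑ i, ‖x i‖ ^ 2 := by
  classical
  set A : Matrix (Fin n) (Fin n) ℂ := Matrix.of vt with hA
  have h1 : A * A.conjTranspose = 1 := by
    ext k l
    have h := hortho l k
    simp only [dotProduct, Pi.star_apply, RCLike.star_def] at h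
    simp only [Matrix.mul_apply, Matrix.conjTranspose_apply, Matrix.one_apply, hA,
      Matrix.of_apply, RCLike.star_def]
    calc ∑ i, vt k i * (starRingEnd ℂ) (vt l i)
        = ∑ i, (starRingEnd ℂ) (vt l i) * vt k i := by
          exact Finset.sum_congr rfl fun i _ => mul_comm _ _
      _ = if l = k then 1 else 0 := h
      _ = if k = l then 1 else 0 := by simp [eq_comm]
  have h2 : A.conjTranspose * A = 1 := mul_eq_one_comm.mp h1
  have h3 : A.transpose * (A.map (starRingEnd ℂ)) = 1 := by
    have := congrArg (Matrix.map · (starRingEnd ℂ)) h2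
    simp only [Matrix.conjTranspose, Matrix.map_mul, Matrix.map_map, Matrix.map_one
      (starRingEnd ℂ) (map_zero _) (map_one _)] at this
    convert this using 2
    ext i j
    simp
  set B : Matrix (Fin n) (Fin n) ℂ := A.map (starRingEnd ℂ) with hB
  have hc : ∀ k, dotProduct (star (vt k)) x = B.mulVec x k := by
    intro k
    simp [dotProduct, Matrix.mulVec, hB, hA, RCLike.star_def]
  have key : dotProduct (star (B.mulVec x)) (B.mulVec x) =
      dotProduct (star x) x := by
    rw [Matrix.star_mulVec, Matrix.dotProduct_mulVec, Matrix.vecMul_vecMul]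
    have : B.conjTranspose * B = 1 := by
      have : B.conjTranspose = A.transpose := by
        ext i j
        simp [hB, Matrix.conjTranspose_apply, Matrix.map_apply]
      rw [this]; exact h3
    rw [this, Matrix.vecMul_one]
  have cast1 : ((∑ k, ‖dotProduct (star (vt k)) x‖ ^ 2 : ℝ) : ℂ) =
      ((∑ i, ‖x i‖ ^ 2 : ℝ) : ℂ) := by
    push_cast
    calc (∑ k, (((‖dotProduct (star (vt k)) x‖ : ℝ) : ℂ)) ^ 2)
        = ∑ k, (starRingEnd ℂ) (B.mulVec x k) * (B.mulVec x k) := by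
          refine Finset.sum_congr rfl fun k _ => ?_
          rw [← hc k, ← norm_sq_cast]; push_cast; ring
      _ = dotProduct (star (B.mulVec x)) (B.mulVec x) := by
          simp [dotProduct, RCLike.star_def]
      _ = dotProduct (star x) x := key
      _ = ∑ i, (starRingEnd ℂ) (x i) * x i := by
          simp [dotProduct, RCLike.star_def]
      _ = ∑ i, (((‖x i‖ : ℝ) : ℂ)) ^ 2 := by
          refine Finset.sum_congr rfl fun i _ => ?_
          rw [← norm_sq_cast]; push_cast; ring
  exact_mod_cast cast1


lemma exp_I_conj_mul_self (α : ℝ) :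
    (starRingEnd ℂ) (Complex.exp (Complex.I * α)) * Complex.exp (Complex.I * α) = 1 := by
  rw [← norm_sq_cast, Complex.norm_exp]
  norm_num [Complex.mul_re]

lemma exists_alpha (z : ℂ) : ∃ α ∈ Set.Ico (0:ℝ) (2 * Real.pi),
    (starRingEnd ℂ) (Complex.exp (Complex.I * α)) * z = ((‖z‖ : ℝ) : ℂ) := by
  have hpi := Real.pi_pos
  have h1 : -Real.pi < z.arg := Complex.neg_pi_lt_arg _
  have h2 : z.arg ≤ Real.pi := Complex.arg_le_pi _
  refine ⟨if 0 ≤ z.arg then z.arg else z.arg + 2 * Real.pi, ?_, ?_⟩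
  · split_ifs with h
    · exact ⟨h, by linarith⟩
    · exact ⟨by linarith, by linarith⟩
  · have he : Complex.exp (Complex.I *
        ((if 0 ≤ z.arg then z.arg else z.arg + 2 * Real.pi : ℝ) : ℂ)) =
        Complex.exp (Complex.I * (z.arg : ℂ)) := by
      split_ifs with h
      · rfl
      · push_cast
        rw [show Complex.I * ((z.arg : ℂ) + 2 * Real.pi) =
            Complex.I * z.arg + 2 * Real.pi * Complex.I by ring,
          Complex.exp_add, Complex.exp_two_pi_mul_I, mul_one]
    rw [he, ← Complex.exp_conj]
    have h3 : (starRingEnd ℂ) (Complex.I * (z.arg : ℂ)) = -(Complex.I * z.arg) := by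
      simp [Complex.conj_ofReal]
    rw [h3]
    nth_rewrite 2 [← Complex.norm_mul_exp_arg_mul_I z]
    rw [show Complex.exp (-(Complex.I * (z.arg : ℂ))) *
        (((‖z‖ : ℝ) : ℂ) * Complex.exp ((z.arg : ℂ) * Complex.I)) =
        ((‖z‖ : ℝ) : ℂ) *
          (Complex.exp (-(Complex.I * (z.arg : ℂ))) * Complex.exp ((z.arg : ℂ) * Complex.I))
        by ring, ← Complex.exp_add,
      show -(Complex.I * (z.arg : ℂ)) + (z.arg : ℂ) * Complex.I = 0 by ring,
      Complex.exp_zero, mul_one]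

lemma norm_sub_sq_of_conj (z e : ℂ) (h1 : (starRingEnd ℂ) e * z = ((‖z‖ : ℝ) : ℂ))
    (h2 : (starRingEnd ℂ) e * e = 1) :
    ‖z - e‖ ^ 2 = ‖z‖ ^ 2 + 1 - 2 * ‖z‖ := by
  have h3 : (starRingEnd ℂ) z * e = ((‖z‖ : ℝ) : ℂ) := by
    have h4 := congrArg (starRingEnd ℂ) h1
    simpa [map_mul, Complex.conj_ofReal, mul_comm] using h4
  have hcast : ((‖z - e‖ ^ 2 : ℝ) : ℂ) = ((‖z‖ ^ 2 + 1 - 2 * ‖z‖ : ℝ) : ℂ) := by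
    rw [norm_sq_cast]
    have expand : (starRingEnd ℂ) (z - e) * (z - e) =
        (starRingEnd ℂ) z * z - (starRingEnd ℂ) z * e -
          ((starRingEnd ℂ) e * z - (starRingEnd ℂ) e * e) := by
      rw [map_sub]; ring
    rw [expand, ← norm_sq_cast, h3, h1, h2]
    push_cast
    ring
  exact_mod_cast hcast

lemma eig_coeff {n : ℕ} (Mt : Matrix (Fin n) (Fin n) ℂ) (hMt : Mt.IsHermitian)
    (lam : ℝ) (v : Fin n → ℂ) (hv : Mt.mulVec v = (lam : ℂ) • v) (x : Fin n → ℂ) :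
    dotProduct (star v) (Mt.mulVec x) =
      (lam : ℂ) * dotProduct (star v) x := by
  rw [Matrix.dotProduct_mulVec]
  have h1 : Matrix.vecMul (star v) Mt = (lam : ℂ) • star v := by
    have h := congrArg star hv
    rw [Matrix.star_mulVec, hMt.eq] at h
    rw [h, star_smul]
    congr 1
    simp [Complex.conj_ofReal]
  rw [h1, smul_dotProduct]
  simp

theorem stmt_18 {n : ℕ} (hn : 2 ≤ n)
    (M Mt : Matrix (Fin n) (Fin n) ℂ)
    (hM : M.IsHermitian) (hMt : Mt.IsHermitian)
    (δ : ℝ) (hδ : 0 ≤ δ)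
    (hclose : specNorm (M - Mt) ≤ δ)
    -- a unit vector in the kernel of M
    (v₁ : Fin n → ℂ) (hv₁ : cvecNorm v₁ = 1) (hMv : M.mulVec v₁ = 0)
    -- the eigenvalues of Mt, sorted increasingly, with orthonormal eigenvectors
    (lam : Fin n → ℝ) (hmono : Monotone lam)
    (vt : Fin n → Fin n → ℂ)
    (hortho : ∀ k l, dotProduct (star (vt k)) (vt l) = if k = l then 1 else 0)
    (heig : ∀ k, Mt.mulVec (vt k) = ((lam k : ℝ) : ℂ) • vt k)
    -- assumption : 0 < λ̃₂ ≤ |λ̃ₖ| for all k ≥ 2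
    (hpos : 0 < lam ⟨1, by omega⟩)
    (hlb : ∀ k : Fin n, 1 ≤ (k : ℕ) → lam ⟨1, by omega⟩ ≤ |lam k|) :
    (∑ k ∈ Finset.univ.filter (fun k : Fin n => 1 ≤ (k : ℕ)),
        ‖dotProduct (star (vt k)) v₁‖ ^ 2 ≤
      δ ^ 2 / lam ⟨1, by omega⟩ ^ 2) ∧
    (1 - δ ^ 2 / lam ⟨1, by omega⟩ ^ 2 ≤
      ‖dotProduct (star (vt ⟨0, by omega⟩)) v₁‖ ^ 2) ∧
    (δ ≤ lam ⟨1, by omega⟩ →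
      ∃ α ∈ Set.Ico (0 : ℝ) (2 * Real.pi),
        cvecNorm (fun i => v₁ i - Complex.exp (Complex.I * α) * vt ⟨0, by omega⟩ i) ≤
          Real.sqrt 2 * δ / lam ⟨1, by omega⟩) := by
  have hn0 : 0 < n := by omega
  have hn1 : 1 < n := by omega
  set k₀ : Fin n := ⟨0, hn0⟩ with hk₀def
  set k₁ : Fin n := ⟨1, hn1⟩ with hk₁def
  set L : ℝ := lam k₁ with hLdef
  set c : Fin n → ℂ := fun k => dotProduct (star (vt k)) v₁ with hcdef
  have hL2pos : 0 < L ^ 2 := pow_pos hpos 2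
  have hnormv : ∑ i, ‖v₁ i‖ ^ 2 = 1 := by rw [← sq_enorm, hv₁]; norm_num
  have hpar1 : ∑ k, ‖c k‖ ^ 2 = 1 := (parseval vt hortho v₁).trans hnormv
  have hw : ∀ k, dotProduct (star (vt k)) (Mt.mulVec v₁) = ((lam k : ℝ) : ℂ) * c k :=
    fun k => eig_coeff Mt hMt (lam k) (vt k) (heig k) v₁
  have hMtv : ∑ i, ‖(Mt.mulVec v₁) i‖ ^ 2 ≤ δ ^ 2 := by
    have h1 : Mt.mulVec v₁ = -((M - Mt).mulVec v₁) := by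
      rw [Matrix.sub_mulVec, hMv]; simp
    have h2 : cvecNorm ((M - Mt).mulVec v₁) ≤ δ := by
      have h := mulVec_enorm_le (M - Mt) v₁
      rw [hv₁, mul_one] at h
      exact h.trans hclose
    have h4 : cvecNorm ((M - Mt).mulVec v₁) ^ 2 ≤ δ ^ 2 :=
      pow_le_pow_left₀ (Real.sqrt_nonneg _) h2 2
    rw [sq_enorm] at h4
    calc ∑ i, ‖(Mt.mulVec v₁) i‖ ^ 2 = ∑ i, ‖((M - Mt).mulVec v₁) i‖ ^ 2 := by
          rw [h1]; simp
      _ ≤ δ ^ 2 := h4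
  have hpar2 : ∑ k, (lam k) ^ 2 * ‖c k‖ ^ 2 ≤ δ ^ 2 := by
    have hp := parseval vt hortho (Mt.mulVec v₁)
    calc ∑ k, (lam k) ^ 2 * ‖c k‖ ^ 2
        = ∑ k, ‖dotProduct (star (vt k)) (Mt.mulVec v₁)‖ ^ 2 := by
          refine Finset.sum_congr rfl fun k _ => ?_
          rw [hw k, norm_mul, Complex.norm_real, Real.norm_eq_abs, mul_pow, sq_abs]
      _ = ∑ i, ‖(Mt.mulVec v₁) i‖ ^ 2 := hp
      _ ≤ δ ^ 2 := hMtv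
  have hfilter : Finset.univ.filter (fun k : Fin n => 1 ≤ (k : ℕ)) = Finset.univ.erase k₀ := by
    ext k
    simp only [Finset.mem_filter, Finset.mem_erase, Finset.mem_univ, true_and, and_true,
      Ne, Fin.ext_iff, hk₀def]
    omega
  have part1' : ∑ k ∈ Finset.univ.erase k₀, ‖c k‖ ^ 2 ≤ δ ^ 2 / L ^ 2 := by
    rw [le_div_iff₀ hL2pos]
    calc (∑ k ∈ Finset.univ.erase k₀, ‖c k‖ ^ 2) * L ^ 2
        = ∑ k ∈ Finset.univ.erase k₀, ‖c k‖ ^ 2 * L ^ 2 := by rw [Finset.sum_mul]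
      _ ≤ ∑ k ∈ Finset.univ.erase k₀, (lam k) ^ 2 * ‖c k‖ ^ 2 := by
          refine Finset.sum_le_sum fun k hk => ?_
          have hk1 : 1 ≤ (k : ℕ) := by
            have hne := (Finset.mem_erase.mp hk).1
            rcases Nat.eq_zero_or_pos (k : ℕ) with h0 | h1
            · exact absurd (Fin.ext h0) hne
            · exact h1
          have hlk : L ≤ |lam k| := hlb k hk1
          have hsq : L ^ 2 ≤ (lam k) ^ 2 := by
            have := sq_abs (lam k)
            nlinarith [hpos]
          nlinarith [sq_nonneg ‖c k‖, norm_nonneg (c k)]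
      _ ≤ ∑ k, (lam k) ^ 2 * ‖c k‖ ^ 2 := by
          refine Finset.sum_le_sum_of_subset_of_nonneg (Finset.subset_univ _) ?_
          intro k _ _
          positivity
      _ ≤ δ ^ 2 := hpar2
  have hsplit : ‖c k₀‖ ^ 2 + ∑ k ∈ Finset.univ.erase k₀, ‖c k‖ ^ 2 = 1 := by
    rw [Finset.add_sum_erase _ (fun k => ‖c k‖ ^ 2) (Finset.mem_univ k₀)]
    exact hpar1
  refine ⟨?_, ?_, ?_⟩
  · rw [hfilter]
    exact part1'
  · have : 1 - δ ^ 2 / L ^ 2 ≤ ‖c k₀‖ ^ 2 := by linarith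
    exact this
  · intro hδL
    have hsumnn : (0:ℝ) ≤ ∑ k ∈ Finset.univ.erase k₀, ‖c k‖ ^ 2 :=
      Finset.sum_nonneg fun k _ => sq_nonneg _
    have hc01 : ‖c k₀‖ ≤ 1 := by nlinarith [norm_nonneg (c k₀)]
    obtain ⟨α, hmem, hkey⟩ := exists_alpha (c k₀)
    have hee := exp_I_conj_mul_self α
    have hnormsub := norm_sub_sq_of_conj (c k₀) (Complex.exp (Complex.I * (α : ℂ))) hkey hee
    have hcoef : ∀ k, dotProduct (star (vt k))
        (fun i => v₁ i - Complex.exp (Complex.I * (α : ℂ)) * vt k₀ i) =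
        c k - (if k = k₀ then Complex.exp (Complex.I * (α : ℂ)) else 0) := by
      intro k
      have horth := hortho k k₀
      simp only [dotProduct, Pi.star_apply] at horth ⊢
      calc ∑ i, star (vt k i) * (v₁ i - Complex.exp (Complex.I * (α : ℂ)) * vt k₀ i)
          = (∑ i, star (vt k i) * v₁ i) -
              Complex.exp (Complex.I * (α : ℂ)) * ∑ i, star (vt k i) * vt k₀ i := by
            rw [Finset.mul_sum, ← Finset.sum_sub_distrib]
            exact Finset.sum_congr rfl fun i _ => by ring
        _ = c k - (if k = k₀ then Complex.exp (Complex.I * (α : ℂ)) else 0) := by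
            rw [horth, hcdef]
            simp only [dotProduct, Pi.star_apply]
            rw [mul_ite, mul_one, mul_zero]
    have hp := parseval vt hortho
      (fun i => v₁ i - Complex.exp (Complex.I * (α : ℂ)) * vt k₀ i)
    have hLHS : ∑ k, ‖dotProduct (star (vt k))
          (fun i => v₁ i - Complex.exp (Complex.I * (α : ℂ)) * vt k₀ i)‖ ^ 2 =
        ‖c k₀ - Complex.exp (Complex.I * (α : ℂ))‖ ^ 2 +
          ∑ k ∈ Finset.univ.erase k₀, ‖c k‖ ^ 2 := by
      rw [← Finset.add_sum_erase _ (fun k => ‖dotProduct (star (vt k))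
        (fun i => v₁ i - Complex.exp (Complex.I * (α : ℂ)) * vt k₀ i)‖ ^ 2)
        (Finset.mem_univ k₀)]
      congr 1
      · rw [hcoef k₀, if_pos rfl]
      · refine Finset.sum_congr rfl fun k hk => ?_
        rw [hcoef k, if_neg (Finset.mem_erase.mp hk).1, sub_zero]
    have hfin : ∑ i, ‖v₁ i - Complex.exp (Complex.I * (α : ℂ)) * vt k₀ i‖ ^ 2 ≤
        2 * δ ^ 2 / L ^ 2 := by
      have h5 : ∑ i, ‖v₁ i - Complex.exp (Complex.I * (α : ℂ)) * vt k₀ i‖ ^ 2 =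
          2 - 2 * ‖c k₀‖ := by
        have h5' := hp
        rw [hLHS] at h5'
        rw [← h5', hnormsub]
        linarith [hsplit]
      rw [h5]
      have h6 : ∑ k ∈ Finset.univ.erase k₀, ‖c k‖ ^ 2 = 1 - ‖c k₀‖ ^ 2 := by linarith
      have h7 : 1 - ‖c k₀‖ ^ 2 ≤ δ ^ 2 / L ^ 2 := by
        rw [← h6]; exact part1'
      have h8 : 2 * δ ^ 2 / L ^ 2 = 2 * (δ ^ 2 / L ^ 2) := by ring
      nlinarith [norm_nonneg (c k₀), mul_nonneg (sub_nonneg.mpr hc01) (norm_nonneg (c k₀))]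
    have h8 : cvecNorm (fun i => v₁ i - Complex.exp (Complex.I * (α : ℂ)) * vt k₀ i) ≤
        Real.sqrt (2 * δ ^ 2 / L ^ 2) :=
      Real.sqrt_le_sqrt hfin
    have h9 : Real.sqrt (2 * δ ^ 2 / L ^ 2) = Real.sqrt 2 * δ / L := by
      rw [show 2 * δ ^ 2 / L ^ 2 = (Real.sqrt 2 * δ / L) ^ 2 by
        rw [div_pow, mul_pow, Real.sq_sqrt (by norm_num : (0:ℝ) ≤ 2)],
        Real.sqrt_sq (by positivity)]
    exact ⟨α, hmem, h8.trans (le_of_eq h9)⟩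
end
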